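/- arXiv:1910.05971 — 7 statements merged into one kernel-verified Lean document; each statement's English description precedes it below -/
import Mathlib

section
/- Grandparent hooking preserves connectivity correctness: if every vertex w satisfies G.Reachable w (f w), and (u,v) is an edge of G, then replacing the parent of f(u) by the grandparent f(f(v)) (i.e., setting f'(f(u)) = f(f(v)) and f' = f elsewhere) preserves the invariant that every vertex is reachable from its parent in G. -/
/-- Grandparent hooking preserves connectivity correctness: updating the parent
of `f u` to the grandparent `f (f v)` for an edge `(u,v)` preserves the
invariant that every vertex is reachable from its parent. -/
theorem grandparent_hooking_preserves_reachability {n : ℕ}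
    (G : SimpleGraph (Fin n)) (f : Fin n → Fin n)
    (hreach : ∀ w, G.Reachable w (f w))
    (u v : Fin n) (hadj : G.Adj u v) :
    ∀ w, G.Reachable w (Function.update f (f u) (f (f v)) w) := by
  intro w
  rcases eq_or_ne w (f u) with h | h
  · subst h
    rw [Function.update_self]
    exact ((hreach u).symm.trans hadj.reachable).trans ((hreach v).trans (hreach (f v)))
  · rw [Function.update_of_ne h]
    exact hreach w
end

section
/- Stochastic hooking preserves both the order invariant and connectivity: if f(w) ≤ w for all w and G.Reachable w (f w) for all w, and (u,v) ∈ E(G) with f(f(v)) < f(f(u)), then the update f'(f(u)) = min(f(f(u)), f(f(v))), f' = f elsewhere, satisfies f'(w) ≤ w and G.Reachable w (f' w) for all w, even when f(u) is not a root. -/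
/-- Stochastic hooking preserves both the order invariant and connectivity:
for an edge `(u,v)` with `f (f v) < f (f u)`, updating the value at `f u` to
`min (f (f u)) (f (f v))` keeps `f' w ≤ w` and `G.Reachable w (f' w)` for all
`w`, even when `f u` is not a root. -/
theorem stochastic_hooking_preserves_invariants {n : ℕ}
    (G : SimpleGraph (Fin n)) (f : Fin n → Fin n)
    (hle : ∀ w, f w ≤ w)
    (hreach : ∀ w, G.Reachable w (f w))
    (u v : Fin n) (hadj : G.Adj u v) (hlt : f (f v) < f (f u)) :
    (∀ w, Function.update f (f u) (min (f (f u)) (f (f v))) w ≤ w) ∧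
    (∀ w, G.Reachable w (Function.update f (f u) (min (f (f u)) (f (f v))) w)) := by
  constructor <;> intro w
  · rcases eq_or_ne w (f u) with rfl | hne
    · rw [Function.update_self]
      exact le_trans (min_le_left _ _) (hle _)
    · rw [Function.update_of_ne hne]; exact hle w
  · rcases eq_or_ne w (f u) with rfl | hne
    · rw [Function.update_self, min_eq_right hlt.le]
      exact ((hreach u).symm.trans (hadj.reachable.trans ((hreach v).trans (hreach (f v)))))
    · rw [Function.update_of_ne hne]; exact hreach w
end

section
/- In FastSV, if the grandparent function f∘f remains unchanged after one full iteration, then every vertex points to a root: f(f(u)) = f(u) for all u. -/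
/-- In FastSV, if the grandparent function is unchanged by one full iteration
(stochastic hooking, aggressive hooking and shortcutting, all performed as
min-assignments starting from `f' = f`), then every vertex points to a root:
`f' (f' u) = f' u` for all `u`. -/
theorem fastsv_grandparent_stable_implies_star {n : ℕ}
    (G : SimpleGraph (Fin n)) (f f' : Fin n → Fin n)
    (hle : ∀ w, f w ≤ w)
    (hstart : ∀ w, f' w ≤ f w)
    (hstoch : ∀ u v, G.Adj u v → f' (f u) ≤ f (f v))
    (haggr : ∀ u v, G.Adj u v → f' u ≤ f (f v))
    (hshort : ∀ u, f' u ≤ f (f u))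
    (hgp : ∀ u, f' (f' u) = f (f u)) :
    ∀ u, f' (f' u) = f' u := by
  intro u
  have h1 : f' (f' u) ≤ f' u := le_trans (hstart _) (hle _)
  have h2 : f' u = f (f u) := le_antisymm (hshort u) (hgp u ▸ h1)
  rw [hgp u, ← h2]
end

section
/- In FastSV, if after an iteration the grandparent f∘f remains unchanged, then every vertex hooked onto its own grandparent: the new parent f'(u) equals f(f(u)) for all u. -/
/-- In FastSV, if the grandparents are unchanged after an iteration, then every
vertex hooked onto its own grandparent: `f' u = f (f u)` for all `u`. -/
theorem fastsv_hooks_to_grandparent {n : ℕ}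
    (f f' : Fin n → Fin n)
    (hle : ∀ w, f w ≤ w)
    (hshort : ∀ w, f' w ≤ f (f w))
    (hgp : ∀ u, f' (f' u) = f (f u)) :
    ∀ u, f' u = f (f u) := by
  intro u
  rcases lt_or_eq_of_le (hshort u) with h | h
  · exfalso
    have h1 : f' (f' u) ≤ f (f (f' u)) := hshort (f' u)
    have h2 : f (f (f' u)) ≤ f (f' u) := hle _
    have h3 : f (f' u) ≤ f' u := hle _
    have := hgp u
    omega
  · exact h
end

section
/- Correctness of early termination in FastSV: if the grandparent vector f∘f remains unchanged after a full FastSV iteration, then the parent vector f remains unchanged in all subsequent iterations; in particular f is already the final answer up to one more shortcut. -/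
open Classical in
/-- One full FastSV iteration on graph `G` applied to parent vector `h`:
each entry `u` of the result is the minimum of its old value `h u`, the
shortcut value `h (h u)`, the aggressive-hooking contributions `h (h v)`
for neighbors `v` of `u`, and the stochastic-hooking contributions `h (h v)`
for edges `(x,v)` with `h x = u`. -/
noncomputable def fastSVStep {n : ℕ} (G : SimpleGraph (Fin n))
    (h : Fin n → Fin n) : Fin n → Fin n := fun u =>
  (insert (h u) (insert (h (h u))
      ((Finset.univ.filter fun v => G.Adj u v).image (fun v => h (h v)) ∪
       (Finset.univ.filter fun v => ∃ x, G.Adj x v ∧ h x = u).image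
         (fun v => h (h v))))).min'
    (Finset.insert_nonempty _ _)

open Classical in
theorem fastSVStep_le {n : ℕ} (G : SimpleGraph (Fin n)) (h : Fin n → Fin n)
    (u : Fin n) : fastSVStep G h u ≤ h u := by
  apply Finset.min'_le
  exact Finset.mem_insert_self _ _

open Classical in
theorem fastSVStep_le_sc {n : ℕ} (G : SimpleGraph (Fin n)) (h : Fin n → Fin n)
    (u : Fin n) : fastSVStep G h u ≤ h (h u) := by
  apply Finset.min'_le
  exact Finset.mem_insert_of_mem (Finset.mem_insert_self _ _)

open Classical in
theorem fastSVStep_le_adj {n : ℕ} (G : SimpleGraph (Fin n)) (h : Fin n → Fin n)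
    {u v : Fin n} (hadj : G.Adj u v) : fastSVStep G h u ≤ h (h v) := by
  apply Finset.min'_le
  refine Finset.mem_insert_of_mem (Finset.mem_insert_of_mem ?_)
  refine Finset.mem_union_left _ (Finset.mem_image.2 ⟨v, ?_, rfl⟩)
  simp [hadj]

/-- Correctness of early termination in FastSV: if one FastSV iteration maps
`f` to `f'` and the grandparent vector is unchanged (`f' ∘ f' = f ∘ f`), then
the parent vector remains unchanged by all subsequent iterations. -/
theorem fastsv_early_termination {n : ℕ}
    (G : SimpleGraph (Fin n)) (f f' : Fin n → Fin n)
    (hle : ∀ w, f w ≤ w)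
    (hstep : f' = fastSVStep G f)
    (hgp : f' ∘ f' = f ∘ f) :
    fastSVStep G f' = f' := by
  classical
  have hgp' : ∀ w, f' (f' w) = f (f w) := fun w => congrFun hgp w
  have hA : ∀ w, f' w ≤ f w := fun w => hstep ▸ fastSVStep_le G f w
  have hle' : ∀ w, f' w ≤ w := fun w => le_trans (hA w) (hle w)
  have hB : ∀ w, f' w ≤ f (f w) := fun w => hstep ▸ fastSVStep_le_sc G f w
  have hC : ∀ x v, G.Adj x v → f' x ≤ f (f v) := fun x v hadj =>
    hstep ▸ fastSVStep_le_adj G f hadj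
  -- edge monotonicity of the grandparent vector
  have hD : ∀ x v, G.Adj x v → f (f x) ≤ f (f v) := by
    intro x v hadj
    calc f (f x) = f' (f' x) := (hgp' x).symm
      _ ≤ f' x := hle' _
      _ ≤ f (f v) := hC x v hadj
  funext u
  apply le_antisymm
  · apply Finset.min'_le
    exact Finset.mem_insert_self _ _
  · apply Finset.le_min'
    intro b hb
    rcases Finset.mem_insert.1 hb with rfl | hb
    · exact le_rfl
    rcases Finset.mem_insert.1 hb with rfl | hb
    · rw [hgp']; exact hB u
    rcases Finset.mem_union.1 hb with hb | hb
    · rcases Finset.mem_image.1 hb with ⟨v, hv, rfl⟩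
      have hadj : G.Adj u v := (Finset.mem_filter.1 hv).2
      rw [hgp']
      exact hC u v hadj
    · rcases Finset.mem_image.1 hb with ⟨v, hv, rfl⟩
      obtain ⟨x, hadj, hx⟩ := (Finset.mem_filter.1 hv).2
      rw [hgp', ← hx, hgp']
      exact hD x v hadj
end

section
/- For a pointer function f : Fin n → Fin n with f(u) ≤ u for all u, shortcutting at least halves the distance to the root: if u requires k ≥ 2 applications of f to reach its root, then under g := f∘f the vertex u requires at most ⌈k/2⌉ applications of g to reach the same root. -/
/-- Shortcutting at least halves the distance to the root: if `u` needs exactly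
`k ≥ 2` applications of `f` to reach its root, then under `g = f ∘ f` it needs
at most `⌈k/2⌉` applications to reach the same root. -/
theorem shortcut_halves_depth {n : ℕ} (f : Fin n → Fin n)
    (hle : ∀ u, f u ≤ u) (u : Fin n) (k : ℕ) (hk : 2 ≤ k)
    (hroot : f (f^[k] u) = f^[k] u)
    (hmin : ∀ j, j < k → f (f^[j] u) ≠ f^[j] u) :
    (f ∘ f)^[(k + 1) / 2] u = f^[k] u := by
  have hcomp : (f ∘ f)^[(k + 1) / 2] u = f^[2 * ((k + 1) / 2)] u := by
    rw [Function.iterate_mul]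
    rfl
  rw [hcomp]
  rcases Nat.even_or_odd k with ⟨m, hm⟩ | ⟨m, hm⟩
  · have : 2 * ((k + 1) / 2) = k := by omega
    rw [this]
  · have : 2 * ((k + 1) / 2) = k + 1 := by omega
    rw [this, Function.iterate_succ_apply', hroot]
end

section
/- Iterated shortcutting alone converges in at most ⌈log₂(n)⌉ + 1 rounds: starting from any f : Fin n → Fin n with f(u) ≤ u, repeatedly replacing f by f∘f yields, after at most ⌈log₂ n⌉ + 1 rounds, a function h with h∘h = h, and h(u) is the root (fixed point) reached from u under the original f. -/
lemma dbl_iter {α : Type*} (g : α → α) (i : ℕ) :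
    (fun F : α → α => F ∘ F)^[i] g = g^[2 ^ i] := by
  induction i generalizing g with
  | zero => simp
  | succ i ih =>
    rw [Function.iterate_succ_apply, ih]
    have : (g ∘ g) = g^[2] := by
      ext x; simp [Function.iterate_succ_apply]
    rw [this, ← Function.iterate_mul, pow_succ, mul_comm]

lemma fixed_after {n : ℕ} (f : Fin n → Fin n) (hle : ∀ u, f u ≤ u) :
    ∀ m (u : Fin n), u.val ≤ m → f (f^[m] u) = f^[m] u := by
  intro m
  induction m with
  | zero => intro u hu; simp; exact le_antisymm (hle u) (Fin.le_def.mpr (by omega))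
  | succ m ih =>
    intro u hu
    rcases eq_or_lt_of_le (hle u) with h | h
    · have : ∀ k, f^[k] u = u := by
        intro k; induction k with
        | zero => rfl
        | succ k ihk => rw [Function.iterate_succ_apply, h, ihk]
      rw [this]; exact h
    · rw [Function.iterate_succ_apply]
      have := Fin.lt_def.mp h
      exact ih (f u) (by omega)

/-- Iterated shortcutting converges in at most `⌈log₂ n⌉ + 1` rounds: starting
from `f : Fin n → Fin n` with `f u ≤ u` and repeatedly replacing `f` by
`f ∘ f`, any round `i` with `n ≤ 2 ^ i` yields an idempotent function `h`
whose value at `u` is the fixed point of `f` eventually reached from `u`. -/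
theorem iterated_shortcut_converges {n : ℕ} (f : Fin n → Fin n)
    (hle : ∀ u, f u ≤ u) (i : ℕ) (hi : n ≤ 2 ^ i) :
    let h := (fun F : Fin n → Fin n => F ∘ F)^[i] f
    (h ∘ h = h) ∧ ∀ u, (∃ k, h u = f^[k] u) ∧ f (h u) = h u := by
  intro h
  have hh : h = f^[2 ^ i] := dbl_iter f i
  have hfix : ∀ u : Fin n, f (h u) = h u := by
    intro u
    rw [hh]
    exact fixed_after f hle _ u (le_of_lt (lt_of_lt_of_le u.isLt hi))
  constructor
  · funext u
    have : ∀ k, f^[k] (h u) = h u := by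
      intro k; induction k with
      | zero => rfl
      | succ k ihk => rw [Function.iterate_succ_apply, hfix, ihk]
    simp only [Function.comp_apply, hh] at *
    exact this _
  · intro u
    exact ⟨⟨2 ^ i, by rw [hh]⟩, hfix u⟩
end
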